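/- Fix α > 0 and ρ ∈ (0,1). Let h: [0,∞) → [0,∞) be increasing with h(t) → ∞ and log h(t) < ρ (min(α,1)) log log t for all large t. Then there exists a random variable X with values in [1, ∞) such that: (i) ∫₀^r y^{α−1} P(X ≥ y) dy ≤ C log r for all r ≥ e and some constant C, and (ii) limsup_{t→∞} t^α P(X ≥ t) / h(t) ≥ 1. -/

import Mathlib

open MeasureTheory Real Filter

set_option maxHeartbeats 1000000 in
/-- Sharpness of the logarithmic error: for any increasing h → ∞ with
log h(t) < ρ min(α,1) log log t eventually (ρ ∈ (0,1)), there is a random variable X on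
[1,∞) whose truncated tail integrals grow at most logarithmically while
limsup t^α P(X ≥ t)/h(t) ≥ 1. -/
theorem tails_optimal (α ρ : ℝ) (hα : 0 < α) (hρ : ρ ∈ Set.Ioo (0 : ℝ) 1)
    (h : ℝ → ℝ) (hmono : MonotoneOn h (Set.Ici (0 : ℝ))) (hnn : ∀ t ≥ (0:ℝ), 0 ≤ h t)
    (htend : Tendsto h atTop atTop)
    (hgrow : ∀ᶠ t in atTop, Real.log (h t) < ρ * min α 1 * Real.log (Real.log t)) :
    ∃ μ : Measure ℝ, IsProbabilityMeasure μ ∧ μ (Set.Iio 1) = 0 ∧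
      (∃ C > 0, ∀ r ≥ Real.exp 1,
        ∫ y in Set.Ioc (0 : ℝ) r, y ^ (α - 1) * (μ (Set.Ici y)).toReal ≤ C * Real.log r) ∧
      1 ≤ Filter.limsup (fun t => t ^ α * (μ (Set.Ici t)).toReal / h t) atTop := by
  classical
  obtain ⟨hρ0, hρ1⟩ := hρ
  set q : ℝ := ρ * min α 1 with hqdef
  have hmin0 : 0 < min α 1 := lt_min hα one_pos
  have hmin1 : min α 1 ≤ 1 := min_le_right _ _
  have hq0 : 0 < q := mul_pos hρ0 hmin0
  have hq1 : q < 1 := by nlinarith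
  -- monotonicity helper
  have hm : ∀ x y : ℝ, 0 ≤ x → x ≤ y → h x ≤ h y := by
    intro x y hx hxy
    exact hmono (Set.mem_Ici.mpr hx) (Set.mem_Ici.mpr (hx.trans hxy)) hxy
  -- extract a threshold T
  obtain ⟨T₀, hT₀⟩ := eventually_atTop.mp (hgrow.and (htend.eventually_ge_atTop 1))
  set T : ℝ := max T₀ 3 with hTdef
  have hT3 : (3:ℝ) ≤ T := le_max_right _ _
  have hT0 : (0:ℝ) < T := by linarith
  have hTh : ∀ t, T ≤ t → 1 ≤ h t := fun t ht =>
    (hT₀ t ((le_max_left _ _).trans ht)).2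
  have hTbound : ∀ t, T ≤ t → h t ≤ (Real.log t) ^ q := by
    intro t ht
    have h1 : (1:ℝ) ≤ h t := hTh t ht
    have hlt : 0 < Real.log t := Real.log_pos (by linarith : (1:ℝ) < t)
    have h2 := (hT₀ t ((le_max_left _ _).trans ht)).1
    calc h t = Real.exp (Real.log (h t)) := (Real.exp_log (by linarith)).symm
      _ ≤ Real.exp (q * Real.log (Real.log t)) := Real.exp_le_exp.mpr h2.le
      _ = (Real.log t) ^ q := by rw [Real.rpow_def_of_pos hlt, mul_comm]
  -- constants
  set c : ℝ := (2:ℝ) ^ (2/α) with hcdef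
  have hc1 : (1:ℝ) ≤ c := by
    have := Real.rpow_le_rpow_of_exponent_le (x := 2) one_le_two
      (by positivity : (0:ℝ) ≤ 2/α)
    simpa [Real.rpow_zero] using this
  have hc0 : (0:ℝ) < c := by linarith
  have hcpow : c ^ (α/2) = 2 := by
    rw [hcdef, ← Real.rpow_mul (by norm_num : (0:ℝ) ≤ 2)]
    rw [show (2/α) * (α/2) = 1 by field_simp]
    exact Real.rpow_one 2
  set B₁ : ℝ := Real.exp (max 1 ((4*q/α)^2)) with hB₁def
  have hB₁ : ∀ x, B₁ ≤ x → (Real.log x) ^ q ≤ x ^ (α/2) := by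
    intro x hx
    have hx0 : (0:ℝ) < x := lt_of_lt_of_le (Real.exp_pos _) hx
    have hL : max 1 ((4*q/α)^2) ≤ Real.log x := by
      rw [← Real.log_exp (max 1 ((4*q/α)^2))]
      exact Real.log_le_log (Real.exp_pos _) hx
    set L := Real.log x with hLdef
    have hL1 : (1:ℝ) ≤ L := (le_max_left _ _).trans hL
    have hL0 : (0:ℝ) < L := by linarith
    have hLq : (4*q/α)^2 ≤ L := (le_max_right _ _).trans hL
    have hsL : 4*q/α ≤ Real.sqrt L := by
      have h1 := Real.sqrt_le_sqrt hLq
      rwa [Real.sqrt_sq (by positivity)] at h1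
    have hsq : Real.sqrt L * Real.sqrt L = L := Real.mul_self_sqrt hL0.le
    have hlogL : Real.log L ≤ 2 * Real.sqrt L := by
      have h1 : Real.log (Real.sqrt L) ≤ Real.sqrt L - 1 :=
        Real.log_le_sub_one_of_pos (Real.sqrt_pos.mpr hL0)
      have h2 : Real.log L = 2 * Real.log (Real.sqrt L) := by
        rw [Real.log_sqrt hL0.le]; ring
      linarith
    have hsL' : 4*q ≤ α * Real.sqrt L := by
      have h1 := mul_le_mul_of_nonneg_left hsL hα.le
      rwa [show α * (4*q/α) = 4*q by field_simp] at h1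
    have key : q * Real.log L ≤ (α/2) * L := by
      have h3 : q * Real.log L ≤ q * (2 * Real.sqrt L) :=
        mul_le_mul_of_nonneg_left hlogL hq0.le
      nlinarith [Real.sqrt_nonneg L, mul_le_mul_of_nonneg_right hsL' (Real.sqrt_nonneg L), hsq]
    calc (Real.log x) ^ q = Real.exp (q * Real.log L) := by
          rw [Real.rpow_def_of_pos hL0, mul_comm]
      _ ≤ Real.exp ((α/2) * L) := Real.exp_le_exp.mpr key
      _ = x ^ (α/2) := by rw [Real.rpow_def_of_pos hx0, mul_comm]
  set B₀ : ℝ := max (T^2) (max B₁ c) with hB₀def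
  have hTB₀ : T ≤ B₀ := by
    have : T ≤ T^2 := by nlinarith
    exact this.trans (le_max_left _ _)
  -- slow variation points exist beyond any bound
  have sv : ∀ M, T ≤ M → ∃ x, M ≤ x ∧ h x ≤ 2 * h (Real.sqrt x) := by
    intro M hM
    by_contra hcon
    push_neg at hcon
    have hM1 : (1:ℝ) < M := by linarith
    have hM0 : (0:ℝ) < M := by linarith
    set u : ℕ → ℝ := fun k => M ^ (2^k) with hudef
    have huM : ∀ k, M ≤ u k := by
      intro k
      simpa [hudef] using le_self_pow₀ hM1.le (Nat.two_pow_pos k).ne'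
    have hu0 : ∀ k, 0 < u k := fun k => lt_of_lt_of_le hM0 (huM k)
    have husq : ∀ k, u (k+1) = (u k)^2 := by
      intro k; simp only [hudef]; rw [pow_succ, pow_mul]
    have hsqrtu : ∀ k, Real.sqrt (u (k+1)) = u k := by
      intro k; rw [husq k, Real.sqrt_sq (hu0 k).le]
    have hgr : ∀ k, (2:ℝ)^k * h M ≤ h (u k) := by
      intro k
      induction k with
      | zero => simp [hudef]
      | succ k ih =>
        have h1 : 2 * h (Real.sqrt (u (k+1))) < h (u (k+1)) := hcon _ (huM (k+1))
        rw [hsqrtu k] at h1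
        have h2 : (2:ℝ)^(k+1) * h M = 2 * ((2:ℝ)^k * h M) := by ring
        rw [h2]
        linarith
    have hup : ∀ k, h (u k) ≤ ((2:ℝ)^k) ^ q * (Real.log M) ^ q := by
      intro k
      have h1 : h (u k) ≤ (Real.log (u k)) ^ q := hTbound _ (hM.trans (huM k))
      have h2 : Real.log (u k) = ((2^k : ℕ) : ℝ) * Real.log M := by
        simp [hudef, Real.log_pow]
      rw [h2, Real.mul_rpow (by positivity) (Real.log_nonneg hM1.le)] at h1
      have h3 : ((2^k : ℕ) : ℝ) = (2:ℝ)^k := by push_cast; ring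
      rwa [h3] at h1
    have hkey : ∀ k, ((2:ℝ)^k) ^ (1-q) ≤ (Real.log M) ^ q := by
      intro k
      have h1 : (2:ℝ)^k ≤ ((2:ℝ)^k) ^ q * (Real.log M) ^ q := by
        have hx : (2:ℝ)^k ≤ (2:ℝ)^k * h M := by
          nlinarith [hTh M hM, pow_pos (show (0:ℝ) < 2 by norm_num) k]
        exact hx.trans ((hgr k).trans (hup k))
      have hsplit : ((2:ℝ)^k : ℝ) = ((2:ℝ)^k) ^ q * ((2:ℝ)^k) ^ (1-q) := by
        rw [← Real.rpow_add (by positivity)]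
        norm_num
      have hpos : (0:ℝ) < ((2:ℝ)^k) ^ q := by positivity
      exact le_of_mul_le_mul_left ((le_of_eq hsplit.symm).trans h1) hpos
    obtain ⟨k, hk⟩ := pow_unbounded_of_one_lt ((Real.log M) ^ q)
      (show (1:ℝ) < 2 ^ (1-q) by
        rw [show (1:ℝ) = (2:ℝ)^(0:ℝ) by simp]
        exact Real.rpow_lt_rpow_of_exponent_lt one_lt_two (by linarith))
    have hconv : ((2:ℝ)^(1-q))^k = ((2:ℝ)^k) ^ (1-q) := by
      rw [← Real.rpow_natCast ((2:ℝ)^(1-q)) k, ← Real.rpow_natCast (2:ℝ) k,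
        ← Real.rpow_mul (by norm_num : (0:ℝ) ≤ 2),
        ← Real.rpow_mul (by norm_num : (0:ℝ) ≤ 2), mul_comm]
    rw [hconv] at hk
    exact absurd hk (not_lt.2 (hkey k))
  -- the sequence of atom locations
  have exseq : ∃ a : ℕ → ℝ, (B₀ ≤ a 0) ∧ (∀ n, h (a n) ≤ 2 * h (Real.sqrt (a n))) ∧
      (∀ n, max B₀ (c * (a n)^2) ≤ a (n+1)) := by
    have hsv' : ∀ M : ℝ, ∃ x, max M B₀ ≤ x ∧ h x ≤ 2 * h (Real.sqrt x) := by
      intro M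
      obtain ⟨x, hx1, hx2⟩ := sv (max (max M B₀) T) (le_max_right _ _)
      exact ⟨x, (le_max_left _ _).trans hx1, hx2⟩
    choose f hf1 hf2 using hsv'
    refine ⟨fun n => Nat.rec (f B₀) (fun _ prev => f (max B₀ (c * prev^2))) n, ?_, ?_, ?_⟩
    · exact (le_max_right _ _).trans (hf1 B₀)
    · intro n
      cases n with
      | zero => exact hf2 B₀
      | succ k => exact hf2 _
    · intro n
      exact (le_max_left _ _).trans (hf1 _)
  obtain ⟨a, ha0B, hasv, hastep⟩ := exseq
  have haB : ∀ n, B₀ ≤ a n := by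
    intro n
    cases n with
    | zero => exact ha0B
    | succ k => exact (le_max_left _ _).trans (hastep k)
  have hagrow : ∀ n, c * (a n)^2 ≤ a (n+1) := fun n => (le_max_right _ _).trans (hastep n)
  have haT2 : ∀ n, T^2 ≤ a n := fun n => (le_max_left _ _).trans (haB n)
  have haB₁ : ∀ n, B₁ ≤ a n := fun n =>
    ((le_max_left _ _).trans (le_max_right _ _)).trans (haB n)
  have hac : ∀ n, c ≤ a n := fun n =>
    ((le_max_right _ _).trans (le_max_right _ _)).trans (haB n)
  have haT : ∀ n, T ≤ a n := fun n => hTB₀.trans (haB n)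
  have ha3 : ∀ n, (3:ℝ) ≤ a n := fun n => hT3.trans (haT n)
  have ha0 : ∀ n, (0:ℝ) < a n := fun n => by linarith [ha3 n]
  have ha1 : ∀ n, (1:ℝ) < a n := fun n => by linarith [ha3 n]
  have hloga : ∀ n, (1:ℝ) ≤ Real.log (a n) := by
    intro n
    rw [Real.le_log_iff_exp_le (ha0 n)]
    have := Real.exp_one_lt_d9
    linarith [ha3 n]
  have hsqT : ∀ n, T ≤ Real.sqrt (a n) := by
    intro n
    have h1 := Real.sqrt_le_sqrt (haT2 n)
    rwa [Real.sqrt_sq hT0.le] at h1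
  have hhb : ∀ n, h (a n) ≤ (Real.log (a n)) ^ q := fun n => hTbound _ (haT n)
  have hh1 : ∀ n, (1:ℝ) ≤ h (a n) := fun n => hTh _ (haT n)
  -- the masses
  set mR : ℕ → ℝ := fun n => h (a n) * (a n) ^ (-α) with hmRdef
  have hm_pos : ∀ n, 0 < mR n := fun n =>
    mul_pos (by linarith [hh1 n]) (Real.rpow_pos_of_pos (ha0 n) _)
  have haInv : ∀ n, (a n) ^ (-α) ≤ mR n := by
    intro n
    have := mul_le_mul_of_nonneg_right (hh1 n) (Real.rpow_nonneg (ha0 n).le (-α))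
    simpa [hmRdef] using this
  have hm_le : ∀ n, mR n ≤ (a n) ^ (-(α/2)) := by
    intro n
    have h1 : h (a n) ≤ (a n) ^ (α/2) := (hhb n).trans (hB₁ _ (haB₁ n))
    have h2 : mR n ≤ (a n) ^ (α/2) * (a n) ^ (-α) :=
      mul_le_mul_of_nonneg_right h1 (Real.rpow_nonneg (ha0 n).le _)
    rwa [← Real.rpow_add (ha0 n), show α/2 + -α = -(α/2) by ring] at h2
  have hmono_a : Monotone a := by
    apply monotone_nat_of_le_succ
    intro n
    have h1 := hagrow n
    nlinarith [ha1 n, hc1, ha0 n]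
  have hm_half : ∀ n, mR (n+1) ≤ mR n / 2 := by
    intro n
    have h1 : mR (n+1) ≤ (a (n+1)) ^ (-(α/2)) := hm_le (n+1)
    have hpos : (0:ℝ) < c * (a n)^2 := mul_pos hc0 (pow_pos (ha0 n) 2)
    have h2 : (a (n+1)) ^ (-(α/2)) ≤ (c * (a n)^2) ^ (-(α/2)) :=
      Real.rpow_le_rpow_of_nonpos hpos (hagrow n) (by linarith)
    have h3 : (c * (a n)^2) ^ (-(α/2)) = (1/2) * (a n) ^ (-α) := by
      rw [Real.mul_rpow hc0.le (by positivity)]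
      congr 1
      · rw [Real.rpow_neg hc0.le, hcpow]; norm_num
      · rw [← Real.rpow_natCast (a n) 2, ← Real.rpow_mul (ha0 n).le]
        congr 1
        push_cast
        ring
    have h4 : (a n) ^ (-α) ≤ mR n := haInv n
    linarith
  have hm_geo : ∀ n k, mR (n + k) ≤ mR n * (1/2)^k := by
    intro n k
    induction k with
    | zero => simp
    | succ k ih =>
      have h1 := hm_half (n + k)
      have h2 : n + (k+1) = (n+k) + 1 := by omega
      rw [h2]
      calc mR ((n+k)+1) ≤ mR (n+k) / 2 := h1
        _ ≤ (mR n * (1/2)^k) / 2 := by linarith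
        _ = mR n * (1/2)^(k+1) := by ring
  have hsummR : Summable mR := by
    have hb : ∀ n, mR n ≤ mR 0 * (1/2)^n := by
      intro n
      have h1 := hm_geo 0 n
      rwa [Nat.zero_add] at h1
    exact Summable.of_nonneg_of_le (fun n => (hm_pos n).le) hb
      ((summable_geometric_of_lt_one (by norm_num) (by norm_num)).mul_left (mR 0))
  have htailsum : ∀ N, (∑' k, mR (k + N)) ≤ 2 * mR N := by
    intro N
    have h1 : ∀ k, mR (k + N) ≤ mR N * (1/2)^k := fun k => by
      rw [add_comm]; exact hm_geo N k
    have h2 := Summable.tsum_le_tsum h1 ((summable_nat_add_iff (f := mR) N).2 hsummR)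
      ((summable_geometric_of_lt_one (by norm_num) (by norm_num)).mul_left (mR N))
    rwa [tsum_mul_left, tsum_geometric_of_lt_one (by norm_num) (by norm_num),
      show ((1:ℝ) - 1/2)⁻¹ = 2 by norm_num, mul_comm] at h2
  have hm0_le : mR 0 ≤ 1/2 := by
    have h1 : mR 0 ≤ (a 0) ^ (-(α/2)) := hm_le 0
    have h2 : (a 0) ^ (-(α/2)) ≤ c ^ (-(α/2)) :=
      Real.rpow_le_rpow_of_nonpos hc0 (hac 0) (by linarith)
    have h3 : c ^ (-(α/2)) = 1/2 := by
      rw [Real.rpow_neg hc0.le, hcpow]; norm_num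
    linarith
  have htsum_le : (∑' n, mR n) ≤ 1 := by
    have := htailsum 0
    simp only [add_zero] at this
    linarith
  -- the measure
  set mE : ℕ → ENNReal := fun n => ENNReal.ofReal (mR n) with hmEdef
  set ν : Measure ℝ := Measure.sum (fun n => mE n • Measure.dirac (a n)) with hνdef
  set S : ENNReal := ∑' n, mE n with hSdef
  set μ : Measure ℝ := ν + (1 - S) • Measure.dirac 1 with hμdef
  have hSeq : S = ENNReal.ofReal (∑' n, mR n) := by
    rw [hSdef, ENNReal.ofReal_tsum_of_nonneg (fun n => (hm_pos n).le) hsummR]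
  have hS1 : S ≤ 1 := by
    rw [hSeq]
    calc ENNReal.ofReal (∑' n, mR n) ≤ ENNReal.ofReal 1 :=
        ENNReal.ofReal_le_ofReal htsum_le
      _ = 1 := ENNReal.ofReal_one
  have hμapp : ∀ s : Set ℝ, MeasurableSet s →
      μ s = (∑' n, mE n * s.indicator 1 (a n)) + (1 - S) * s.indicator 1 1 := by
    intro s hs
    rw [hμdef, Measure.add_apply, Measure.smul_apply, Measure.dirac_apply' _ hs,
      hνdef, Measure.sum_apply _ hs, smul_eq_mul]
    congr 1
    refine tsum_congr fun n => ?_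
    rw [Measure.smul_apply, Measure.dirac_apply' _ hs, smul_eq_mul]
  have hprob : IsProbabilityMeasure μ := by
    constructor
    rw [hμapp _ MeasurableSet.univ]
    simp only [Set.indicator_univ, Pi.one_apply, mul_one]
    rw [← hSdef, add_comm]
    exact tsub_add_cancel_of_le hS1
  have hfin : ∀ s : Set ℝ, μ s ≠ ⊤ := fun s =>
    (lt_of_le_of_lt (measure_mono (Set.subset_univ s)) (by simp [hprob.measure_univ])).ne
  have hIio : μ (Set.Iio 1) = 0 := by
    rw [hμapp _ measurableSet_Iio]
    have h1 : ∀ n, (Set.Iio (1:ℝ)).indicator (1 : ℝ → ENNReal) (a n) = 0 := fun n =>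
      Set.indicator_of_notMem (by simp only [Set.mem_Iio, not_lt]; linarith [ha1 n]) _
    have h2 : (Set.Iio (1:ℝ)).indicator (1 : ℝ → ENNReal) 1 = 0 :=
      Set.indicator_of_notMem (by simp) _
    simp [h1, h2]
  -- tail formula
  have hggsum : ∀ t : ℝ, Summable (fun n => if t ≤ a n then mR n else 0) := by
    intro t
    apply Summable.of_nonneg_of_le (fun n => ?_) (fun n => ?_) hsummR
    · split <;> simp [le_of_lt (hm_pos n)]
    · split
      · exact le_rfl
      · exact (hm_pos n).le
  have hIci_en : ∀ t : ℝ, 1 < t →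
      μ (Set.Ici t) = ENNReal.ofReal (∑' n, if t ≤ a n then mR n else 0) := by
    intro t ht
    rw [hμapp _ measurableSet_Ici]
    have h1 : (Set.Ici t).indicator (1 : ℝ → ENNReal) 1 = 0 :=
      Set.indicator_of_notMem (by simp only [Set.mem_Ici, not_le]; linarith) _
    rw [h1, mul_zero, add_zero]
    rw [ENNReal.ofReal_tsum_of_nonneg (fun n => by split <;> simp [le_of_lt (hm_pos n)])
      (hggsum t)]
    refine tsum_congr fun n => ?_
    by_cases hc' : t ≤ a n
    · rw [Set.indicator_of_mem (Set.mem_Ici.mpr hc'), if_pos hc']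
      simp [hmEdef]
    · rw [Set.indicator_of_notMem (by simpa using hc'), if_neg hc', mul_zero,
        ENNReal.ofReal_zero]
  have tail_le : ∀ t : ℝ, 1 < t → ∀ N : ℕ,
      (μ (Set.Ici t)).toReal ≤
        (∑ k ∈ Finset.range N, (if t ≤ a k then mR k else 0)) + 2 * mR N := by
    intro t ht N
    rw [hIci_en t ht, ENNReal.toReal_ofReal (tsum_nonneg (fun n => by
      split <;> simp [le_of_lt (hm_pos n)]))]
    rw [← Summable.sum_add_tsum_nat_add (f := fun n => if t ≤ a n then mR n else 0) N (hggsum t)]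
    refine add_le_add le_rfl ?_
    have hs1 : Summable (fun i => if t ≤ a (i + N) then mR (i + N) else 0) :=
      (summable_nat_add_iff (f := fun n => if t ≤ a n then mR n else 0) N).2 (hggsum t)
    have hs2 : Summable (fun i => mR (i + N)) :=
      (summable_nat_add_iff (f := mR) N).2 hsummR
    calc (∑' i, if t ≤ a (i + N) then mR (i + N) else 0)
        ≤ ∑' i, mR (i + N) := by
          apply Summable.tsum_le_tsum (fun i => ?_) hs1 hs2
          split
          · exact le_rfl
          · exact (hm_pos _).le
      _ ≤ 2 * mR N := htailsum N
  have tail_ge : ∀ n, mR n ≤ (μ (Set.Ici (a n))).toReal := by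
    intro n
    have h1 : ENNReal.ofReal (mR n) ≤ μ (Set.Ici (a n)) := by
      rw [hIci_en _ (ha1 n)]
      apply ENNReal.ofReal_le_ofReal
      have h2 := Summable.le_tsum (hggsum (a n)) n (fun j _ => by
        split <;> simp [le_of_lt (hm_pos j)])
      simpa using h2
    have h2 := ENNReal.toReal_mono (hfin _) h1
    rwa [ENNReal.toReal_ofReal (hm_pos n).le] at h2
  have tail_le_one : ∀ t : ℝ, (μ (Set.Ici t)).toReal ≤ 1 := by
    intro t
    have := prob_le_one (μ := μ) (s := Set.Ici t)
    calc (μ (Set.Ici t)).toReal ≤ (1 : ENNReal).toReal :=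
        ENNReal.toReal_mono (by simp) this
      _ = 1 := by simp
  -- basic identities
  have hca : ∀ n, (a n) ^ α * mR n = h (a n) := by
    intro n
    show (a n) ^ α * (h (a n) * (a n) ^ (-α)) = h (a n)
    rw [mul_comm (h (a n)), ← mul_assoc, ← Real.rpow_add (ha0 n)]
    simp
  have hsqrt_rpow : ∀ n, (Real.sqrt (a n)) ^ α = (a n) ^ (α/2) := by
    intro n
    rw [Real.sqrt_eq_rpow, ← Real.rpow_mul (ha0 n).le]
    rw [show 1/2 * α = α/2 by ring]
  have hsqm : ∀ n, (Real.sqrt (a n)) ^ α * mR n ≤ 1 := by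
    intro n
    rw [hsqrt_rpow n]
    show (a n) ^ (α/2) * (h (a n) * (a n) ^ (-α)) ≤ 1
    have h4 : h (a n) ≤ (a n) ^ (α/2) := (hhb n).trans (hB₁ _ (haB₁ n))
    have h5 : (a n) ^ (α/2) * (h (a n) * (a n) ^ (-α)) ≤
        (a n) ^ (α/2) * ((a n) ^ (α/2) * (a n) ^ (-α)) := by
      apply mul_le_mul_of_nonneg_left _ (Real.rpow_nonneg (ha0 n).le _)
      exact mul_le_mul_of_nonneg_right h4 (Real.rpow_nonneg (ha0 n).le _)
    have h6 : (a n) ^ (α/2) * ((a n) ^ (α/2) * (a n) ^ (-α)) = 1 := by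
      rw [← Real.rpow_add (ha0 n), ← Real.rpow_add (ha0 n),
        show α/2 + (α/2 + -α) = 0 by ring, Real.rpow_zero]
    linarith
  -- key upper bound for t^α * mR n when t ≤ a n
  have key : ∀ (n : ℕ) (t : ℝ), 0 < t → t ≤ a n → t ^ α * mR n ≤ 2 * h t + 1 := by
    intro n t h0t htan
    have hht0 : 0 ≤ h t := hnn t h0t.le
    by_cases hcase : Real.sqrt (a n) ≤ t
    · have hTt : T ≤ t := (hsqT n).trans hcase
      have h1 : t ^ α ≤ (a n) ^ α := Real.rpow_le_rpow h0t.le htan hα.le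
      have h2 : t ^ α * mR n ≤ (a n) ^ α * mR n :=
        mul_le_mul_of_nonneg_right h1 (hm_pos n).le
      rw [hca n] at h2
      have h4 := hasv n
      have h5 : h (Real.sqrt (a n)) ≤ h t := hm _ _ (Real.sqrt_nonneg _) hcase
      linarith
    · push_neg at hcase
      have h1 : t ^ α ≤ (Real.sqrt (a n)) ^ α :=
        Real.rpow_le_rpow h0t.le hcase.le hα.le
      have h2 : t ^ α * mR n ≤ (Real.sqrt (a n)) ^ α * mR n :=
        mul_le_mul_of_nonneg_right h1 (hm_pos n).le
      have h3 := hsqm n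
      linarith
  -- unboundedness of the sequence
  have hage : ∀ n : ℕ, (n : ℝ) ≤ a n := by
    intro n
    induction n with
    | zero => simpa using (ha0 0).le
    | succ k ih =>
      have h1 := hagrow k
      have h2 : (a k)^2 ≤ c * (a k)^2 := by
        calc (a k)^2 = 1 * (a k)^2 := (one_mul _).symm
          _ ≤ c * (a k)^2 := mul_le_mul_of_nonneg_right hc1 (sq_nonneg _)
      push_cast
      nlinarith [ha3 k]
  have haN : ∀ b : ℝ, ∃ n, b ≤ a n := by
    intro b
    obtain ⟨n, hn⟩ := exists_nat_ge b
    exact ⟨n, hn.trans (hage n)⟩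
  have hblock : ∀ t : ℝ, a 0 < t → ∃ n, a n < t ∧ t ≤ a (n+1) := by
    intro t ht
    have hex : ∃ k, t ≤ a k := haN t
    have hN0 : Nat.find hex ≠ 0 := by
      intro h0
      have := Nat.find_spec hex
      rw [h0] at this
      linarith
    obtain ⟨n, hn⟩ := Nat.exists_eq_succ_of_ne_zero hN0
    refine ⟨n, ?_, ?_⟩
    · have := Nat.find_min hex (m := n) (by omega)
      push_neg at this
      exact this
    · have := Nat.find_spec hex
      rwa [hn] at this
  -- boundedness of the ratio
  have hbdd : ∀ᶠ t in atTop, t ^ α * (μ (Set.Ici t)).toReal / h t ≤ 6 := by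
    filter_upwards [eventually_gt_atTop (a 0)] with t ht
    obtain ⟨n, hn1, hn2⟩ := hblock t ht
    have hTt : T ≤ t := (haT 0).trans ht.le
    have h0t : (0:ℝ) < t := by linarith
    have hht : 1 ≤ h t := hTh t hTt
    rw [div_le_iff₀ (by linarith : (0:ℝ) < h t)]
    have h1 : (μ (Set.Ici t)).toReal ≤ 2 * mR (n+1) := by
      have h2 := tail_le t (by linarith [ha1 0] : 1 < t) (n+1)
      have hz : (∑ k ∈ Finset.range (n+1), if t ≤ a k then mR k else 0) = 0 := by
        apply Finset.sum_eq_zero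
        intro k hk
        have hk' : k ≤ n := Nat.lt_succ_iff.mp (Finset.mem_range.mp hk)
        exact if_neg (not_le.2 (lt_of_le_of_lt (hmono_a hk') hn1))
      rw [hz, zero_add] at h2
      exact h2
    have h3 := key (n+1) t h0t hn2
    have h4 : t ^ α * (μ (Set.Ici t)).toReal ≤ t ^ α * (2 * mR (n+1)) :=
      mul_le_mul_of_nonneg_left h1 (Real.rpow_nonneg h0t.le α)
    have h5 : t ^ α * (2 * mR (n+1)) = 2 * (t ^ α * mR (n+1)) := by ring
    nlinarith
  have hbddU : IsBoundedUnder (· ≤ ·) atTop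
      (fun t => t ^ α * (μ (Set.Ici t)).toReal / h t) :=
    ⟨6, by simpa [eventually_map] using hbdd⟩
  -- frequent lower bound
  have hfreq : ∃ᶠ t in atTop, (1:ℝ) ≤ t ^ α * (μ (Set.Ici t)).toReal / h t := by
    rw [frequently_atTop]
    intro b
    obtain ⟨n, hn⟩ := haN b
    refine ⟨a n, hn, ?_⟩
    have hpos : (0:ℝ) < h (a n) := by linarith [hh1 n]
    rw [le_div_iff₀ hpos, one_mul]
    calc h (a n) = (a n) ^ α * mR n := (hca n).symm
      _ ≤ (a n) ^ α * (μ (Set.Ici (a n))).toReal :=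
        mul_le_mul_of_nonneg_left (tail_ge n) (Real.rpow_nonneg (ha0 n).le _)
  have hlimsup : (1:ℝ) ≤
      Filter.limsup (fun t => t ^ α * (μ (Set.Ici t)).toReal / h t) atTop :=
    le_limsup_of_frequently_le hfreq hbddU
  -- the integral bound
  set w : ℝ := (1/2 : ℝ) ^ q with hwdef
  have hw0 : 0 < w := Real.rpow_pos_of_pos (by norm_num) _
  have hw1 : w < 1 := Real.rpow_lt_one (by norm_num) (by norm_num) hq0
  set Kq : ℝ := (1 - w)⁻¹ with hKqdef
  have hKq0 : 0 < Kq := by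
    rw [hKqdef]; exact inv_pos.mpr (by linarith)
  set C : ℝ := (7 + Kq) / α with hCdef
  have hC0 : 0 < C := by
    rw [hCdef]; positivity
  -- log-doubling
  have hlog2 : ∀ n, 2 * Real.log (a n) ≤ Real.log (a (n+1)) := by
    intro n
    have h1 : (a n)^2 ≤ a (n+1) := by nlinarith [hagrow n, ha0 n, hc1, sq_nonneg (a n)]
    have h2 := Real.log_le_log (pow_pos (ha0 n) 2) h1
    rwa [Real.log_pow, Nat.cast_ofNat] at h2
  have hlogpow : ∀ k j : ℕ, (2:ℝ)^j * Real.log (a k) ≤ Real.log (a (k + j)) := by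
    intro k j
    induction j with
    | zero => simp
    | succ j ih =>
      have h1 := hlog2 (k + j)
      have h2 : (2:ℝ)^(j+1) * Real.log (a k) = 2 * ((2:ℝ)^j * Real.log (a k)) := by ring
      rw [h2, show k + (j+1) = (k+j) + 1 by ring]
      linarith
  -- integral value helper
  have hIval : ∀ b : ℝ, 0 ≤ b → ∫ y in Set.Ioc (0:ℝ) b, y ^ (α-1) = b ^ α / α := by
    intro b hb
    rw [← intervalIntegral.integral_of_le hb, integral_rpow (Or.inl (by linarith))]
    rw [show α - 1 + 1 = α by ring, Real.zero_rpow hα.ne', sub_zero]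
  refine ⟨μ, hprob, hIio, ⟨C, hC0, ?_⟩, hlimsup⟩
  intro r hr
  have hr1 : (1:ℝ) < r := by
    have := Real.exp_one_lt_d9
    have h0 : (1:ℝ) < Real.exp 1 := by
      have := Real.add_one_le_exp (1:ℝ)
      linarith
    linarith
  have hr0 : (0:ℝ) < r := by linarith
  have hrlog : (1:ℝ) ≤ Real.log r := by
    rw [Real.le_log_iff_exp_le hr0]
    simpa using hr
  have hex : ∃ k, r < a k := by
    obtain ⟨n, hn⟩ := haN (r + 1)
    exact ⟨n, by linarith⟩
  set N := Nat.find hex with hNdef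
  have hrN : r < a N := Nat.find_spec hex
  have hklt : ∀ k, k < N → a k ≤ r := fun k hk => not_lt.1 (Nat.find_min hex hk)
  -- integrability of building blocks
  have hbase_int : IntegrableOn (fun y : ℝ => y ^ (α-1)) (Set.Ioc 0 r) volume := by
    have h1 := intervalIntegral.intervalIntegrable_rpow' (a := 0) (b := r)
      (by linarith : (-1:ℝ) < α - 1)
    exact (intervalIntegrable_iff_integrableOn_Ioc_of_le (by linarith : (0:ℝ) ≤ r)).1 h1
  set g : ℝ → ℝ := fun y =>
    (Set.indicator (Set.Iic 1) (fun y => y ^ (α-1)) y + y ^ (α-1) * (2 * mR N)) +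
      ∑ k ∈ Finset.range N, Set.indicator (Set.Iic (a k)) (fun y => y ^ (α-1) * mR k) y
    with hgdef
  have hg_int : IntegrableOn g (Set.Ioc 0 r) volume := by
    apply Integrable.add
    · exact (hbase_int.indicator measurableSet_Iic).add (hbase_int.mul_const _)
    · exact integrable_finset_sum _ (fun k _ =>
        (hbase_int.mul_const (mR k)).indicator measurableSet_Iic)
  have hdom : ∀ y ∈ Set.Ioc (0:ℝ) r, y ^ (α-1) * (μ (Set.Ici y)).toReal ≤ g y := by
    intro y hy
    obtain ⟨hy0, hyr⟩ := hy
    have hynn : 0 ≤ y ^ (α-1) := Real.rpow_nonneg hy0.le _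
    have hsum_nonneg : 0 ≤ ∑ k ∈ Finset.range N,
        Set.indicator (Set.Iic (a k)) (fun y => y ^ (α-1) * mR k) y :=
      Finset.sum_nonneg (fun k _ => Set.indicator_apply_nonneg
        (fun _ => mul_nonneg hynn (hm_pos k).le))
    have hind1 : (0:ℝ) ≤ Set.indicator (Set.Iic 1) (fun y => y ^ (α-1)) y :=
      Set.indicator_apply_nonneg (fun _ => hynn)
    have hmid : (0:ℝ) ≤ y ^ (α-1) * (2 * mR N) :=
      mul_nonneg hynn (mul_nonneg (by norm_num) (hm_pos N).le)
    show _ ≤ (Set.indicator (Set.Iic 1) (fun y => y ^ (α-1)) y + y ^ (α-1) * (2 * mR N)) +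
      ∑ k ∈ Finset.range N, Set.indicator (Set.Iic (a k)) (fun y => y ^ (α-1) * mR k) y
    by_cases hc' : y ≤ 1
    · have h1 : y ^ (α-1) * (μ (Set.Ici y)).toReal ≤ y ^ (α-1) := by
        have h2 := mul_le_mul_of_nonneg_left (tail_le_one y) hynn
        simpa using h2
      have h2 : Set.indicator (Set.Iic 1) (fun y => y ^ (α-1)) y = y ^ (α-1) :=
        Set.indicator_of_mem (Set.mem_Iic.mpr hc') _
      linarith
    · push_neg at hc'
      have h1 := tail_le y hc' N
      have hmul := mul_le_mul_of_nonneg_left h1 hynn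
      have hterm : ∀ k, y ^ (α-1) * (if y ≤ a k then mR k else 0) =
          Set.indicator (Set.Iic (a k)) (fun y => y ^ (α-1) * mR k) y := by
        intro k
        by_cases hk : y ≤ a k
        · rw [if_pos hk, Set.indicator_of_mem (Set.mem_Iic.mpr hk)]
        · rw [if_neg hk, mul_zero, Set.indicator_of_notMem (by simpa using hk)]
      have heq : y ^ (α-1) * ((∑ k ∈ Finset.range N, if y ≤ a k then mR k else 0) + 2 * mR N)
          = (∑ k ∈ Finset.range N,
              Set.indicator (Set.Iic (a k)) (fun y => y ^ (α-1) * mR k) y) +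
            y ^ (α-1) * (2 * mR N) := by
        rw [mul_add, Finset.mul_sum]
        congr 1
        exact Finset.sum_congr rfl (fun k _ => hterm k)
      rw [heq] at hmul
      linarith
  -- a.e. bounds
  have hae1 : (0 : ℝ → ℝ) ≤ᵐ[volume.restrict (Set.Ioc 0 r)]
      fun y => y ^ (α-1) * (μ (Set.Ici y)).toReal := by
    rw [Filter.EventuallyLE, ae_restrict_iff' measurableSet_Ioc]
    refine ae_of_all _ (fun y hy => ?_)
    exact mul_nonneg (Real.rpow_nonneg hy.1.le _) ENNReal.toReal_nonneg
  have hae2 : (fun y => y ^ (α-1) * (μ (Set.Ici y)).toReal)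
      ≤ᵐ[volume.restrict (Set.Ioc 0 r)] g := by
    rw [Filter.EventuallyLE, ae_restrict_iff' measurableSet_Ioc]
    exact ae_of_all _ hdom
  have hstep1 : ∫ y in Set.Ioc (0:ℝ) r, y ^ (α-1) * (μ (Set.Ici y)).toReal ≤
      ∫ y in Set.Ioc (0:ℝ) r, g y := integral_mono_of_nonneg hae1 hg_int hae2
  -- evaluate the integral of g
  have hInt1 : ∫ y in Set.Ioc (0:ℝ) r, Set.indicator (Set.Iic 1) (fun y => y ^ (α-1)) y
      = 1/α := by
    rw [integral_indicator measurableSet_Iic, Measure.restrict_restrict measurableSet_Iic]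
    have hset : Set.Iic (1:ℝ) ∩ Set.Ioc 0 r = Set.Ioc 0 1 := by
      rw [Set.inter_comm, Set.Ioc_inter_Iic, min_eq_right hr1.le]
    rw [hset, hIval 1 zero_le_one, Real.one_rpow]
  have hInt2 : ∫ y in Set.Ioc (0:ℝ) r, y ^ (α-1) * (2 * mR N)
      = (r ^ α / α) * (2 * mR N) := by
    rw [integral_mul_const, hIval r hr0.le]
  have hInt3 : ∀ k, k < N →
      (∫ y in Set.Ioc (0:ℝ) r,
        Set.indicator (Set.Iic (a k)) (fun y => y ^ (α-1) * mR k) y)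
      = ((a k) ^ α / α) * mR k := by
    intro k hk
    rw [integral_indicator measurableSet_Iic, Measure.restrict_restrict measurableSet_Iic]
    have hset : Set.Iic (a k) ∩ Set.Ioc (0:ℝ) r = Set.Ioc 0 (a k) := by
      rw [Set.inter_comm, Set.Ioc_inter_Iic, min_eq_right (hklt k hk)]
    rw [hset, integral_mul_const, hIval (a k) (ha0 k).le]
  have hgval : ∫ y in Set.Ioc (0:ℝ) r, g y
      = (1/α + (r ^ α / α) * (2 * mR N)) +
        ∑ k ∈ Finset.range N, ((a k) ^ α / α) * mR k := by
    have hF12_int : IntegrableOn (fun y =>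
        Set.indicator (Set.Iic 1) (fun y => y ^ (α-1)) y + y ^ (α-1) * (2 * mR N))
        (Set.Ioc 0 r) volume :=
      (hbase_int.indicator measurableSet_Iic).add (hbase_int.mul_const _)
    have hF3_int : IntegrableOn (fun y => ∑ k ∈ Finset.range N,
        Set.indicator (Set.Iic (a k)) (fun y => y ^ (α-1) * mR k) y) (Set.Ioc 0 r) volume :=
      integrable_finset_sum _ (fun k _ =>
        (hbase_int.mul_const (mR k)).indicator measurableSet_Iic)
    have e1 : ∫ y in Set.Ioc (0:ℝ) r, g y
        = (∫ y in Set.Ioc (0:ℝ) r,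
            (Set.indicator (Set.Iic 1) (fun y => y ^ (α-1)) y + y ^ (α-1) * (2 * mR N)))
          + ∫ y in Set.Ioc (0:ℝ) r, (∑ k ∈ Finset.range N,
              Set.indicator (Set.Iic (a k)) (fun y => y ^ (α-1) * mR k) y) :=
      integral_add hF12_int hF3_int
    have e2 : (∫ y in Set.Ioc (0:ℝ) r,
        (Set.indicator (Set.Iic 1) (fun y => y ^ (α-1)) y + y ^ (α-1) * (2 * mR N)))
        = (∫ y in Set.Ioc (0:ℝ) r, Set.indicator (Set.Iic 1) (fun y => y ^ (α-1)) y)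
          + ∫ y in Set.Ioc (0:ℝ) r, y ^ (α-1) * (2 * mR N) :=
      integral_add (hbase_int.indicator measurableSet_Iic) (hbase_int.mul_const _)
    have e3 : (∫ y in Set.Ioc (0:ℝ) r, (∑ k ∈ Finset.range N,
        Set.indicator (Set.Iic (a k)) (fun y => y ^ (α-1) * mR k) y))
        = ∑ k ∈ Finset.range N, ∫ y in Set.Ioc (0:ℝ) r,
            Set.indicator (Set.Iic (a k)) (fun y => y ^ (α-1) * mR k) y :=
      integral_finset_sum _ (fun k _ =>
        (hbase_int.mul_const (mR k)).indicator measurableSet_Iic)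
    rw [e1, e2, e3, hInt1, hInt2]
    congr 1
    exact Finset.sum_congr rfl (fun k hk => hInt3 k (Finset.mem_range.mp hk))
  -- bound the pieces
  have hterm2 : r ^ α * mR N ≤ 2 * Real.log r + 1 := by
    by_cases hcase : Real.sqrt (a N) ≤ r
    · have hTr : T ≤ r := (hsqT N).trans hcase
      have h1 : r ^ α * mR N ≤ (a N) ^ α * mR N :=
        mul_le_mul_of_nonneg_right (Real.rpow_le_rpow hr0.le hrN.le hα.le) (hm_pos N).le
      rw [hca N] at h1
      have h4 := hasv N
      have h5 : h (Real.sqrt (a N)) ≤ h r := hm _ _ (Real.sqrt_nonneg _) hcase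
      have h6 : h r ≤ (Real.log r) ^ q := hTbound r hTr
      have h7 : (Real.log r) ^ q ≤ Real.log r := by
        have h8 := Real.rpow_le_rpow_of_exponent_le hrlog hq1.le
        rwa [Real.rpow_one] at h8
      linarith
    · push_neg at hcase
      have h1 : r ^ α * mR N ≤ (Real.sqrt (a N)) ^ α * mR N :=
        mul_le_mul_of_nonneg_right (Real.rpow_le_rpow hr0.le hcase.le hα.le) (hm_pos N).le
      have h2 := hsqm N
      linarith
  have hsumlog : (∑ k ∈ Finset.range N, h (a k)) ≤ Kq * Real.log r := by
    rcases Nat.eq_zero_or_pos N with hN0 | hNpos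
    · rw [hN0]
      simp only [Finset.range_zero, Finset.sum_empty]
      positivity
    · obtain ⟨M, hM⟩ : ∃ M, N = M + 1 := ⟨N - 1, by omega⟩
      rw [hM]
      have hstepb : ∀ k, k < M + 1 → h (a k) ≤ w ^ (M - k) * (Real.log (a M)) ^ q := by
        intro k hk
        have hk' : k ≤ M := Nat.lt_succ_iff.mp hk
        have h1 : (2:ℝ)^(M-k) * Real.log (a k) ≤ Real.log (a M) := by
          have h2 := hlogpow k (M - k)
          rwa [Nat.add_sub_cancel' hk'] at h2
        have h2 : Real.log (a k) ≤ (1/2:ℝ)^(M-k) * Real.log (a M) := by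
          rw [div_pow, one_pow, div_mul_eq_mul_div, le_div_iff₀ (pow_pos two_pos _)]
          linarith [h1]
        have h3 : h (a k) ≤ (Real.log (a k)) ^ q := hhb k
        have h4 : (Real.log (a k)) ^ q ≤ ((1/2:ℝ)^(M-k) * Real.log (a M)) ^ q :=
          Real.rpow_le_rpow (by linarith [hloga k]) h2 hq0.le
        have h5 : ((1/2:ℝ)^(M-k) * Real.log (a M)) ^ q
            = ((1/2:ℝ)^(M-k) : ℝ) ^ q * (Real.log (a M)) ^ q :=
          Real.mul_rpow (by positivity) (by linarith [hloga M])
        have h6 : ((1/2:ℝ)^(M-k) : ℝ) ^ q = w ^ (M-k) := by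
          rw [← Real.rpow_natCast (1/2 : ℝ) (M-k), ← Real.rpow_mul (by norm_num), mul_comm,
            Real.rpow_mul (by norm_num), Real.rpow_natCast]
        rw [h5, h6] at h4
        linarith
      have hgeo : (∑ k ∈ Finset.range (M+1), w ^ (M - k)) ≤ Kq := by
        have hrefl : ∑ k ∈ Finset.range (M+1), w ^ (M - k)
            = ∑ j ∈ Finset.range (M+1), w ^ j := by
          have h1 := Finset.sum_range_reflect (fun j => w ^ j) (M+1)
          simpa using h1
        rw [hrefl]
        calc ∑ j ∈ Finset.range (M+1), w ^ j ≤ ∑' j : ℕ, w ^ j :=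
            Summable.sum_le_tsum _ (fun j _ => pow_nonneg hw0.le j)
              (summable_geometric_of_lt_one hw0.le hw1)
          _ = (1 - w)⁻¹ := tsum_geometric_of_lt_one hw0.le hw1
          _ = Kq := rfl
      have hlogM : (Real.log (a M)) ^ q ≤ Real.log r := by
        have h7 : (Real.log (a M)) ^ q ≤ Real.log (a M) := by
          have h8 := Real.rpow_le_rpow_of_exponent_le (hloga M) hq1.le
          rwa [Real.rpow_one] at h8
        have h8 : Real.log (a M) ≤ Real.log r :=
          Real.log_le_log (ha0 M) (hklt M (by omega))
        linarith
      calc ∑ k ∈ Finset.range (M+1), h (a k)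
          ≤ ∑ k ∈ Finset.range (M+1), w ^ (M - k) * (Real.log (a M)) ^ q :=
            Finset.sum_le_sum (fun k hk => hstepb k (Finset.mem_range.mp hk))
        _ = (∑ k ∈ Finset.range (M+1), w ^ (M - k)) * (Real.log (a M)) ^ q := by
            rw [← Finset.sum_mul]
        _ ≤ Kq * (Real.log (a M)) ^ q :=
            mul_le_mul_of_nonneg_right hgeo
              (Real.rpow_nonneg (by linarith [hloga M]) _)
        _ ≤ Kq * Real.log r := mul_le_mul_of_nonneg_left hlogM hKq0.le
  have hsum2 : (∑ k ∈ Finset.range N, ((a k) ^ α / α) * mR k)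
      = (∑ k ∈ Finset.range N, h (a k)) / α := by
    rw [Finset.sum_div]
    exact Finset.sum_congr rfl (fun k _ => by rw [div_mul_eq_mul_div, hca k])
  calc ∫ y in Set.Ioc (0:ℝ) r, y ^ (α - 1) * (μ (Set.Ici y)).toReal
      ≤ ∫ y in Set.Ioc (0:ℝ) r, g y := hstep1
    _ = (1/α + (r ^ α / α) * (2 * mR N)) +
        ∑ k ∈ Finset.range N, ((a k) ^ α / α) * mR k := hgval
    _ = (1 + 2 * (r ^ α * mR N) + (∑ k ∈ Finset.range N, h (a k))) / α := by
        rw [hsum2]; ring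
    _ ≤ ((7 + Kq) * Real.log r) / α := by
        have hXY : 1 + 2 * (r ^ α * mR N) + (∑ k ∈ Finset.range N, h (a k))
            ≤ (7 + Kq) * Real.log r := by nlinarith [hterm2, hsumlog, hrlog]
        exact (div_le_div_iff_of_pos_right hα).mpr hXY
    _ = C * Real.log r := by rw [hCdef]; ring
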